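/- Let D = ⟨R, C, ≺⟩ be a defeasible theory and ⟨T, F⟩ the well-founded model of D according to NDL. Then for every β-stable set M of D: T ⊆ M and F ∩ β_D(M) = ∅. -/

import Mathlib

namespace DLWFS

universe u

/-- Ground literals over a type `A` of atoms: atoms and their classical complements. -/
inductive Lit (A : Type u) : Type u where
  | pos : A → Lit A
  | neg : A → Lit A

/-- The classical complement `p̄` of a literal `p`. -/
def Lit.compl {A : Type u} : Lit A → Lit A
  | .pos a => .neg a
  | .neg a => .pos a

/-- The three kinds of rules of a defeasible theory. -/
inductive RuleKind : Type where
  | strict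
  | defeasible
  | defeater
deriving DecidableEq

/-- A rule of a defeasible theory: a kind, a body (a set of literals) and a head literal. -/
structure DRule (A : Type u) where
  kind : RuleKind
  body : Set (Lit A)
  head : Lit A

/-- A defeasible theory `D = ⟨R, C, ≺⟩`. -/
structure DTheory (A : Type u) where
  rules : Set (DRule A)
  conflicts : Set (Set (Lit A))
  prec : DRule A → DRule A → Prop

namespace DTheory

variable {A : Type u}

/-- The strict rules `R_s`. -/
def Rs (D : DTheory A) : Set (DRule A) := {r ∈ D.rules | r.kind = RuleKind.strict}

/-- The defeasible rules `R_d`. -/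
def Rd (D : DTheory A) : Set (DRule A) := {r ∈ D.rules | r.kind = RuleKind.defeasible}

/-- The defeater rules `R_u`. -/
def Ru (D : DTheory A) : Set (DRule A) := {r ∈ D.rules | r.kind = RuleKind.defeater}

/-- `C[p]`: the conflict sets containing literal `p`. -/
def Cset (D : DTheory A) (p : Lit A) : Set (Set (Lit A)) := {c ∈ D.conflicts | p ∈ c}

/-- Structural conditions in the definition of a defeasible theory: a countable set of
rules with finite bodies, a countable set of finite conflict sets containing every
minimal conflict set `{p, ¬p}`, and an acyclic priority relation over non-strict rules. -/
def WellFormed (D : DTheory A) : Prop :=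
  D.rules.Countable ∧ D.conflicts.Countable ∧
  (∀ r ∈ D.rules, r.body.Finite) ∧
  (∀ c ∈ D.conflicts, c.Finite) ∧
  (∀ p : A, ({Lit.pos p, Lit.neg p} : Set (Lit A)) ∈ D.conflicts) ∧
  (∀ r s, D.prec r s → r.kind ≠ RuleKind.strict ∧ s.kind ≠ RuleKind.strict) ∧
  (∀ r, ¬ Relation.TransGen D.prec r r)

/-- `C = C_MIN`: the conflict sets are exactly the minimal ones `{p, ¬p}`. -/
def MinimalConflicts (D : DTheory A) : Prop :=
  D.conflicts = {c | ∃ p : A, c = ({Lit.pos p, Lit.neg p} : Set (Lit A))}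

end DTheory

/-- A 3-valued interpretation: a pair `⟨T, F⟩` of sets. -/
abbrev Interp (L : Type u) : Type u := Set L × Set L

variable {A : Type u}

/-- `S` is ADL-unfounded with respect to theory `D` and interpretation `I = ⟨T, F⟩`. -/
def ADLUnfounded (D : DTheory A) (I : Interp (Lit A)) (S : Set (Lit A)) : Prop :=
  ∀ p ∈ S,
    (∀ r ∈ D.Rs, r.head = p → (r.body ∩ (I.2 ∪ S)).Nonempty) ∧
    (∀ r ∈ D.Rd, r.head = p →
      (r.body ∩ (I.2 ∪ S)).Nonempty ∨
      ∃ c ∈ D.conflicts, p ∈ c ∧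
        ∀ q ∈ c \ {p}, ∃ s ∈ D.rules, s.head = q ∧ s.body ⊆ I.1 ∧
          (D.prec r s ∨ s.kind = RuleKind.strict))

/-- `S` is NDL-unfounded with respect to theory `D` and interpretation `I = ⟨T, F⟩`. -/
def NDLUnfounded (D : DTheory A) (I : Interp (Lit A)) (S : Set (Lit A)) : Prop :=
  ∀ p ∈ S,
    (∀ r ∈ D.Rs, r.head = p → (r.body ∩ (I.2 ∪ S)).Nonempty) ∧
    (∀ r ∈ D.Rd, r.head = p →
      (r.body ∩ (I.2 ∪ S)).Nonempty ∨
      ∃ c ∈ D.conflicts, p ∈ c ∧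
        ∀ q ∈ c \ {p}, ∃ s ∈ D.rules, s.head = q ∧ s.body ⊆ I.1 ∧
          ¬ D.prec s r)

/-- `U_D(I)` for ADL: the union of all ADL-unfounded sets. -/
def UA (D : DTheory A) (I : Interp (Lit A)) : Set (Lit A) :=
  ⋃₀ {S | ADLUnfounded D I S}

/-- `U_D(I)` for NDL: the union of all NDL-unfounded sets. -/
def UN (D : DTheory A) (I : Interp (Lit A)) : Set (Lit A) :=
  ⋃₀ {S | NDLUnfounded D I S}

/-- `T_D(I)`: the literals having a witness of provability with respect to `I = ⟨T, F⟩`. -/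
def TD (D : DTheory A) (I : Interp (Lit A)) : Set (Lit A) :=
  {p | ∃ r ∈ D.rules, r.head = p ∧ r.body ⊆ I.1 ∧
    (r.kind = RuleKind.strict ∨
      (r.kind = RuleKind.defeasible ∧
        ∀ c ∈ D.conflicts, p ∈ c →
          ∃ q ∈ c \ {p}, ∀ s ∈ D.rules, s.head = q →
            (D.prec s r ∨ (s.body ∩ I.2).Nonempty)))}

/-- `W_D` for ADL. -/
def WA (D : DTheory A) (I : Interp (Lit A)) : Interp (Lit A) := (TD D I, UA D I)

/-- `W_D` for NDL. -/
def WN (D : DTheory A) (I : Interp (Lit A)) : Interp (Lit A) := (TD D I, UN D I)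

/-- `I` is the well-founded model for the operator `W`: the least fixpoint of `W`
(componentwise order). -/
def IsWFModel {L : Type u} (W : Interp L → Interp L) (I : Interp L) : Prop :=
  W I = I ∧ ∀ J, W J = J → I.1 ⊆ J.1 ∧ I.2 ⊆ J.2

/-- A rule of a normal logic program: `head ← pos, ∼neg`. -/
structure NRule (A : Type u) where
  head : A
  pos : Set A
  neg : Set A

/-- A normal logic program: a set of rules. -/
abbrev NProgram (A : Type u) : Type u := Set (NRule A)

/-- Structural conditions in the definition of a normal logic program: a countable
set of ground rules with finite bodies. -/
def NProgram.WellFormed (P : NProgram A) : Prop :=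
  P.Countable ∧ ∀ r ∈ P, r.pos.Finite ∧ r.neg.Finite

/-- The immediate consequence operator `T_Π` on 3-valued interpretations. -/
def TP (P : NProgram A) (I : Interp A) : Set A :=
  {a | ∃ r ∈ P, r.head = a ∧ r.pos ⊆ I.1 ∧ r.neg ⊆ I.2}

/-- `S` is an unfounded set of program `P` with respect to interpretation `I = ⟨T, F⟩`. -/
def PUnfounded (P : NProgram A) (I : Interp A) (S : Set A) : Prop :=
  ∀ p ∈ S, ∀ r ∈ P, r.head = p →
    (r.pos ∩ (I.2 ∪ S)).Nonempty ∨ (r.neg ∩ I.1).Nonempty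

/-- `U_Π(I)`: the greatest unfounded set (union of all unfounded sets). -/
def UP (P : NProgram A) (I : Interp A) : Set A :=
  ⋃₀ {S | PUnfounded P I S}

/-- `W_Π(I) = ⟨T_Π(I), U_Π(I)⟩`. -/
def WP (P : NProgram A) (I : Interp A) : Interp A := (TP P I, UP P I)

/-- Transfinite iteration of an operator `W` from `⊥`, taking suprema at limit ordinals. -/
noncomputable def iterW {α : Type*} [CompleteLattice α] (W : α → α) : Ordinal.{0} → α :=
  fun o =>
    Ordinal.limitRecOn (motive := fun _ => α) o ⊥ (fun _ ih => W ih)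
      (fun o' _ ih => ⨆ x : Set.Iio o', ih x.1 x.2)

/-- One step of the immediate consequence operator for a set of defeasible-theory rules. -/
def TRstep (R : Set (DRule A)) (S : Set (Lit A)) : Set (Lit A) :=
  {p | ∃ r ∈ R, r.head = p ∧ r.body ⊆ S}

/-- The finite iterates `T_R ↑ n`. -/
def TRiter (R : Set (DRule A)) : ℕ → Set (Lit A)
  | 0 => ∅
  | n + 1 => TRstep R (TRiter R n)

/-- `Cl(R) = T_R ↑ ω`. -/
def ClR (R : Set (DRule A)) : Set (Lit A) := ⋃ n, TRiter R n

/-- The `α`-reduct `D_α^S` of a defeasible theory. -/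
def alphaReduct (D : DTheory A) (S : Set (Lit A)) : Set (DRule A) :=
  D.Rs ∪ {r ∈ D.Rd | ∀ c ∈ D.conflicts, r.head ∈ c → ∃ q ∈ c \ {r.head}, q ∉ S}

/-- The ambiguity-propagating operator `α_D(S) = Cl(D_α^S)`. -/
def alphaOp (D : DTheory A) (S : Set (Lit A)) : Set (Lit A) := ClR (alphaReduct D S)

/-- The `β`-reduct `D_β^S` of a defeasible theory. -/
def betaReduct (D : DTheory A) (S : Set (Lit A)) : Set (DRule A) :=
  D.Rs ∪ {r ∈ D.Rd | ∀ c ∈ D.conflicts, r.head ∈ c →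
    ∃ q ∈ c \ {r.head}, ∀ s ∈ D.rules, s.head = q → (¬ s.body ⊆ S ∨ D.prec s r)}

/-- The ambiguity-blocking operator `β_D(S) = Cl(D_β^S)`. -/
def betaOp (D : DTheory A) (S : Set (Lit A)) : Set (Lit A) := ClR (betaReduct D S)

/-- `S` is an `α`-stable set of `D`. -/
def AlphaStable (D : DTheory A) (S : Set (Lit A)) : Prop := alphaOp D S = S

/-- `S` is a `β`-stable set of `D`. -/
def BetaStable (D : DTheory A) (S : Set (Lit A)) : Prop := betaOp D S = S

/-- The sequence `X_D↑λ`: `X↑0 = ∅`, `X↑(λ+1) = β_D(β_D(X↑λ))`, unions at limits. -/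
noncomputable def Xseq (D : DTheory A) : Ordinal.{0} → Set (Lit A) :=
  iterW (fun S => betaOp D (betaOp D S))

/-- The Gelfond–Lifschitz reduct `Π^S`. -/
def glReduct (P : NProgram A) (S : Set A) : NProgram A :=
  {r' | ∃ r ∈ P, r.neg ∩ S = ∅ ∧ r' = NRule.mk r.head r.pos ∅}

/-- One step of the immediate consequence operator for a NAF-free program. -/
def TPstep (P : NProgram A) (S : Set A) : Set A :=
  {a | ∃ r ∈ P, r.head = a ∧ r.pos ⊆ S}

/-- The finite iterates `T_Π ↑ n` of a NAF-free program. -/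
def TPiter (P : NProgram A) : ℕ → Set A
  | 0 => ∅
  | n + 1 => TPstep P (TPiter P n)

/-- `Cl(Π) = T_Π ↑ ω`. -/
def ClP (P : NProgram A) : Set A := ⋃ n, TPiter P n

/-- The Gelfond–Lifschitz operator `γ_Π(S) = Cl(Π^S)`. -/
def gamma (P : NProgram A) (S : Set A) : Set A := ClP (glReduct P S)

/-- `S` is a stable model of `P`. -/
def StableModel (P : NProgram A) (S : Set A) : Prop := gamma P S = S

/-- `Prod(C[p])`: all sets obtained by choosing one literal other than `p` from each
conflict set containing `p`. -/
def ProdC (D : DTheory A) (p : Lit A) : Set (Set (Lit A)) :=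
  {Q | ∃ f : Set (Lit A) → Lit A,
    (∀ c ∈ D.conflicts, p ∈ c → f c ∈ c \ {p}) ∧
    Q = f '' {c ∈ D.conflicts | p ∈ c}}

/-- The logic program translation `Π_D` of a defeasible theory `D` (negative literals
are treated as fresh atoms, so the atoms of the program are the literals of `D`). -/
def lpTrans (D : DTheory A) : NProgram (Lit A) :=
  {r' | ∃ r ∈ D.Rs, r' = NRule.mk r.head r.body ∅} ∪
  {r' | ∃ r ∈ D.Rd, ∃ Q ∈ ProdC D r.head, r' = NRule.mk r.head r.body Q}

/-- The explicit version `Φ` of a normal program `Π`: atoms of `Φ` are the literals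
over the atoms of `Π` (`¬p` being a fresh atom). -/
def explicitVer (P : NProgram A) : NProgram (Lit A) :=
  {r' | ∃ r ∈ P, r' = NRule.mk (Lit.pos r.head) (Lit.pos '' r.pos ∪ Lit.neg '' r.neg) ∅} ∪
  {r' | ∃ p : A, r' = NRule.mk (Lit.neg p) ∅ {Lit.pos p}}

/-- The minimal conflict sets over atom type `A`. -/
def CMin (A : Type u) : Set (Set (Lit A)) :=
  {c | ∃ p : A, c = ({Lit.pos p, Lit.neg p} : Set (Lit A))}

/-- The defeasible theory translation `D_Π` of a normal program `Π`: each program rule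
becomes a strict rule (default literals `∼b` becoming negative literals `¬b`), and each
atom `p` yields a presumption `∅ ⇒ ¬p`; conflict sets are minimal and `≺` is empty. -/
def dtTrans (P : NProgram A) : DTheory A :=
  { rules :=
      {e | ∃ r ∈ P, e = DRule.mk RuleKind.strict
            (Lit.pos '' r.pos ∪ Lit.neg '' r.neg) (Lit.pos r.head)} ∪
      {e | ∃ p : A, e = DRule.mk RuleKind.defeasible ∅ (Lit.neg p)}
    conflicts := CMin A
    prec := fun _ _ => False }

/-- `M^¬ = M ∪ {¬p : p ∉ M}`, atoms being identified with positive literals. -/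
def negCompl (M : Set A) : Set (Lit A) :=
  Lit.pos '' M ∪ Lit.neg '' {p | p ∉ M}

end DLWFS


namespace DLWFS

section Aux
variable {A : Type*}

private lemma TRstep_mono (R : Set (DRule A)) {S T : Set (Lit A)} (h : S ⊆ T) :
    TRstep R S ⊆ TRstep R T := by
  rintro p ⟨r, hr, hh, hb⟩; exact ⟨r, hr, hh, hb.trans h⟩

private lemma TRiter_chain (R : Set (DRule A)) : ∀ n, TRiter R n ⊆ TRiter R (n + 1) := by
  intro n; induction n with
  | zero => intro x hx; cases hx
  | succ n ih => exact TRstep_mono R ih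

private lemma TRiter_mono (R : Set (DRule A)) : Monotone fun n => TRiter R n := by
  apply monotone_nat_of_le_succ; exact TRiter_chain R

private lemma finset_subset_chain {α : Type*} {f : ℕ → Set α} (hf : Monotone f)
    {s : Set α} (hs : s.Finite) (h : s ⊆ ⋃ n, f n) : ∃ n, s ⊆ f n := by
  revert h
  refine Set.Finite.induction_on s hs (motive := fun s _ => s ⊆ ⋃ n, f n → ∃ n, s ⊆ f n) (fun _ => ⟨0, by simp⟩) ?_
  intro a s _ _ ih h
  obtain ⟨n, hn⟩ := ih ((Set.subset_insert a s).trans h)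
  obtain ⟨_, ⟨m, rfl⟩, hm⟩ := h (Set.mem_insert a s)
  refine ⟨max n m, ?_⟩
  intro x hx
  rcases hx with rfl | hx
  · exact hf (le_max_right n m) hm
  · exact hf (le_max_left n m) (hn hx)

end Aux

end DLWFS

namespace DLWFS

/-- Let `D = ⟨R, C, ≺⟩` be a defeasible theory and `⟨T, F⟩` its well-founded model under
NDL. For every `β`-stable set `M` of `D`: `T ⊆ M` and `F ∩ β_D(M) = ∅`. -/
theorem ndl_wfm_within_beta_stable {A : Type*} (D : DTheory A)
    (hwf : D.WellFormed)
    (I : Interp (Lit A)) (hI : IsWFModel (WN D) I) :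
    ∀ M : Set (Lit A), BetaStable D M → I.1 ⊆ M ∧ I.2 ∩ betaOp D M = ∅ := by
  intro M hM
  classical
  set R' : Set (DRule A) := betaReduct D M with hR'
  have hMeq : ClR R' = M := hM
  have hrules : ∀ r ∈ R', r ∈ D.rules := by
    rintro r (hr | hr)
    · exact hr.1
    · exact hr.1.1
  have hbodyfin : ∀ r ∈ R', r.body.Finite := fun r hr => hwf.2.2.1 r (hrules r hr)
  -- TRstep R' M = M
  have hstep : TRstep R' M = M := by
    apply Set.Subset.antisymm
    · rintro p ⟨r, hr, hh, hb⟩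
      rw [← hMeq] at hb ⊢
      obtain ⟨n, hn⟩ := finset_subset_chain (TRiter_mono R') (hbodyfin r hr) hb
      exact Set.mem_iUnion.2 ⟨n + 1, ⟨r, hr, hh, hn⟩⟩
    · intro p hp
      rw [← hMeq] at hp
      obtain ⟨n, hn⟩ := Set.mem_iUnion.1 hp
      cases n with
      | zero => cases hn
      | succ n =>
        obtain ⟨r, hr, hh, hb⟩ := hn
        refine ⟨r, hr, hh, hb.trans ?_⟩
        rw [← hMeq]; exact Set.subset_iUnion (TRiter R') n
  -- TD D (M, Mᶜ) = M
  have hTDstep : TD D (M, Mᶜ) = TRstep R' M := by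
    apply Set.Subset.antisymm
    · rintro p ⟨r, hr, hh, hb, hcase⟩
      refine ⟨r, ?_, hh, hb⟩
      rcases hcase with hs | ⟨hd, hcond⟩
      · exact Or.inl ⟨hr, hs⟩
      · refine Or.inr ⟨⟨hr, hd⟩, ?_⟩
        intro c hc hpc
        obtain ⟨q, hq, hqs⟩ := hcond c hc (hh ▸ hpc)
        refine ⟨q, by rwa [hh], ?_⟩
        intro s hs hsh
        rcases hqs s hs hsh with h | h
        · exact Or.inr h
        · exact Or.inl fun hsub => by
            obtain ⟨x, hx1, hx2⟩ := h; exact hx2 (hsub hx1)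
    · rintro p ⟨r, hr, hh, hb⟩
      rcases hr with ⟨hr, hs⟩ | ⟨⟨hr, hd⟩, hcond⟩
      · exact ⟨r, hr, hh, hb, Or.inl hs⟩
      · refine ⟨r, hr, hh, hb, Or.inr ⟨hd, ?_⟩⟩
        intro c hc hpc
        obtain ⟨q, hq, hqs⟩ := hcond c hc (hh ▸ hpc)
        refine ⟨q, by rwa [hh] at hq, ?_⟩
        intro s hs hsh
        rcases hqs s hs hsh with h | h
        · right
          rcases Set.not_subset.1 h with ⟨x, hx1, hx2⟩
          exact ⟨x, hx1, hx2⟩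
        · exact Or.inl h
  have hTD : TD D (M, Mᶜ) = M := hTDstep.trans hstep
  -- Mᶜ is NDL-unfounded wrt (M, Mᶜ)
  have hcomplU : NDLUnfounded D (M, Mᶜ) Mᶜ := by
    intro p hp
    constructor
    · intro r hr hh
      by_contra hne
      apply hp
      rw [← hstep]
      refine ⟨r, Or.inl hr, hh, ?_⟩
      intro x hx
      by_contra hxM
      exact hne ⟨x, hx, Or.inl hxM⟩
    · intro r hr hh
      by_cases hb : r.body ⊆ M
      · right
        have hnotred : r ∉ R' := fun hrR => hp (hstep ▸ ⟨r, hrR, hh, hb⟩)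
        have hnotd : r ∉ {r ∈ D.Rd | ∀ c ∈ D.conflicts, r.head ∈ c →
            ∃ q ∈ c \ {r.head}, ∀ s ∈ D.rules, s.head = q → (¬ s.body ⊆ M ∨ D.prec s r)} :=
          fun h => hnotred (Or.inr h)
        simp only [Set.mem_setOf_eq, not_and, not_forall, not_exists, not_or, not_not] at hnotd
        obtain ⟨c, hc, hpc, hall⟩ := hnotd hr
        refine ⟨c, hc, hh ▸ hpc, ?_⟩
        intro q hq
        obtain ⟨s, hs, hsh, hsb, hsp⟩ := hall q (by rwa [hh])
        exact ⟨s, hs, hsh, hsb, hsp⟩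
      · left
        rcases Set.not_subset.1 hb with ⟨x, hx1, hx2⟩
        exact ⟨x, hx1, Or.inl hx2⟩
  -- every NDL-unfounded set wrt (M, Mᶜ) is disjoint from M
  have hUdisj : ∀ S, NDLUnfounded D (M, Mᶜ) S → ∀ n, ∀ p ∈ TRiter R' n, p ∉ S := by
    intro S hS n
    induction n with
    | zero => intro p hp; cases hp
    | succ n ih =>
      rintro p ⟨r, hr, hh, hb⟩ hpS
      have hbM : r.body ⊆ M := hb.trans (by
        rw [← hMeq]; exact Set.subset_iUnion (TRiter R') n)
      have hbdisj : r.body ∩ (Mᶜ ∪ S) = ∅ := by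
        ext x
        simp only [Set.mem_inter_iff, Set.mem_union, Set.mem_compl_iff, Set.mem_empty_iff_false,
          iff_false, not_and, not_or, not_not]
        intro hx
        exact ⟨hbM hx, ih x (hb hx)⟩
      obtain ⟨h1, h2⟩ := hS p hpS
      rcases hr with hrs | ⟨hrd, hcond⟩
      · obtain ⟨x, hx⟩ := h1 r hrs hh
        rw [hbdisj] at hx; cases hx
      · rcases h2 r hrd hh with hne | ⟨c, hc, hpc, hall⟩
        · obtain ⟨x, hx⟩ := hne
          rw [hbdisj] at hx; cases hx
        · obtain ⟨q, hq, hqs⟩ := hcond c hc (hh ▸ hpc)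
          obtain ⟨s, hs, hsh, hsb, hsp⟩ := hall q (by rwa [hh] at hq)
          rcases hqs s hs hsh with h | h
          · exact h hsb
          · exact hsp h
  -- UN D (M, Mᶜ) = Mᶜ
  have hUN : UN D (M, Mᶜ) = Mᶜ := by
    apply Set.Subset.antisymm
    · rintro p ⟨S, hS, hpS⟩ hpM
      rw [← hMeq] at hpM
      obtain ⟨n, hn⟩ := Set.mem_iUnion.1 hpM
      exact hUdisj S hS n p hn hpS
    · intro p hp
      exact ⟨Mᶜ, hcomplU, hp⟩
  -- (M, Mᶜ) is a fixpoint of WN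
  have hfix : WN D (M, Mᶜ) = (M, Mᶜ) := by
    unfold WN
    rw [hTD, hUN]
  obtain ⟨hsub1, hsub2⟩ := hI.2 (M, Mᶜ) hfix
  refine ⟨hsub1, ?_⟩
  rw [show betaOp D M = M from hM]
  ext x
  simp only [Set.mem_inter_iff, Set.mem_empty_iff_false, iff_false, not_and]
  intro hx
  exact hsub2 hx


end DLWFS
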